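/- Let β > 0, λ > 0, and for s, s' ∈ [0, β] define f(s,s') = (e^{-|s-s'|λ} + e^{-(β-|s-s'|)λ})/(1 - e^{-βλ}). Then for all g ∈ L²([0,β]): ∫₀^β∫₀^β conj(g(s))·g(s')·f(s,s') ds ds' ≥ 0, i.e., the integral operator on L²([0,β]) with kernel f is positive semi-definite. -/

import Mathlib

open MeasureTheory Real intervalIntegral Set

noncomputable def kk (lam β s u : ℝ) : ℝ :=
  if u ≤ s then Real.exp (lam*(u - s)) else Real.exp (lam*(u - s - β))

lemma int_exp_mul (c a b : ℝ) (hc : c ≠ 0) :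
    ∫ u in a..b, Real.exp (c*u) = (Real.exp (c*b) - Real.exp (c*a))/c := by
  rw [integral_comp_mul_left (fun x => Real.exp x) hc, integral_exp]
  field_simp
  rw [smul_eq_mul, ← mul_assoc, mul_one_div_cancel hc, one_mul]

lemma piece (lam c a b lo hi : ℝ) (hab : lo ≤ hi) (hlam : 0 < lam)
    {β : ℝ}
    (h : ∀ u ∈ Ioc lo hi, kk lam β a u * kk lam β b u = Real.exp (2*lam*u) * Real.exp c) :
    ∫ u in lo..hi, kk lam β a u * kk lam β b u
      = (Real.exp (2*lam*hi + c) - Real.exp (2*lam*lo + c))/(2*lam) := by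
  rw [integral_of_le hab, setIntegral_congr_fun measurableSet_Ioc h, ← integral_of_le hab]
  have : ∫ u in lo..hi, Real.exp (2*lam*u) * Real.exp c
      = (∫ u in lo..hi, Real.exp (2*lam*u)) * Real.exp c := by
    rw [intervalIntegral.integral_mul_const]
  rw [this, int_exp_mul (2*lam) lo hi (by positivity)]
  rw [div_mul_eq_mul_div, sub_mul, ← Real.exp_add, ← Real.exp_add]

lemma kk_intble (lam β a b lo hi c : ℝ) (hab : lo ≤ hi)
    (h : ∀ u ∈ Ioc lo hi, kk lam β a u * kk lam β b u = Real.exp (2*lam*u) * Real.exp c) :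
    IntervalIntegrable (fun u => kk lam β a u * kk lam β b u) volume lo hi := by
  rw [intervalIntegrable_iff_integrableOn_Ioc_of_le hab]
  exact (((continuous_exp.comp (by continuity)).mul continuous_const).integrableOn_Ioc).congr_fun
    (fun u hu => (h u hu).symm) measurableSet_Ioc

lemma kk_int {lam β : ℝ} (hlam : 0 < lam) {s s' : ℝ}
    (hs0 : 0 ≤ s') (hss : s' ≤ s) (hsβ : s ≤ β) :
    ∫ u in (0:ℝ)..β, kk lam β s u * kk lam β s' u
      = (Real.exp (-(s-s')*lam) + Real.exp (-(β-(s-s'))*lam)) * (1 - Real.exp (-β*lam)) / (2*lam) := by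
  have h1 : ∀ u ∈ Ioc (0:ℝ) s', kk lam β s u * kk lam β s' u
      = Real.exp (2*lam*u) * Real.exp (-lam*(s+s')) := by
    intro u hu
    rw [kk, kk, if_pos (hu.2.trans hss), if_pos hu.2, ← Real.exp_add, ← Real.exp_add]
    ring_nf
  have h2 : ∀ u ∈ Ioc s' s, kk lam β s u * kk lam β s' u
      = Real.exp (2*lam*u) * Real.exp (-lam*(s+s'+β)) := by
    intro u hu
    rw [kk, kk, if_pos hu.2, if_neg (not_le.2 hu.1), ← Real.exp_add, ← Real.exp_add]
    ring_nf
  have h3 : ∀ u ∈ Ioc s β, kk lam β s u * kk lam β s' u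
      = Real.exp (2*lam*u) * Real.exp (-lam*(s+s'+2*β)) := by
    intro u hu
    rw [kk, kk, if_neg (not_le.2 hu.1), if_neg (not_le.2 (lt_of_le_of_lt hss hu.1)),
      ← Real.exp_add, ← Real.exp_add]
    ring_nf
  have e1 := piece lam (-lam*(s+s')) s s' 0 s' hs0 hlam h1
  have e2 := piece lam (-lam*(s+s'+β)) s s' s' s hss hlam h2
  have e3 := piece lam (-lam*(s+s'+2*β)) s s' s β hsβ hlam h3
  have i1 := kk_intble lam β s s' 0 s' (-lam*(s+s')) hs0 h1
  have i2 := kk_intble lam β s s' s' s (-lam*(s+s'+β)) hss h2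
  have i3 := kk_intble lam β s s' s β (-lam*(s+s'+2*β)) hsβ h3
  rw [← integral_add_adjacent_intervals (i1.trans i2) i3,
      ← integral_add_adjacent_intervals i1 i2, e1, e2, e3]
  have hl : (2*lam) ≠ 0 := by positivity
  field_simp
  simp only [mul_one, mul_sub, sub_mul, add_mul, ← Real.exp_add]
  ring_nf

lemma kk_nonneg (lam β s u : ℝ) : 0 ≤ kk lam β s u := by
  unfold kk; split <;> positivity

lemma kk_le_one {lam β s u : ℝ} (hlam : 0 ≤ lam) (hs : 0 ≤ s) (hu : u ≤ β) :
    kk lam β s u ≤ 1 := by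
  unfold kk; split
  · exact Real.exp_le_one_iff.2 (by nlinarith)
  · exact Real.exp_le_one_iff.2 (by nlinarith)

lemma kk_meas (lam β : ℝ) : Measurable (fun p : ℝ × ℝ => kk lam β p.1 p.2) := by
  unfold kk
  exact Measurable.ite (measurableSet_le measurable_snd measurable_fst)
    (by fun_prop) (by fun_prop)

lemma kk_int_Icc {lam β : ℝ} (hβ : 0 < β) (hlam : 0 < lam) {s s' : ℝ}
    (hs : s ∈ Icc 0 β) (hs' : s' ∈ Icc 0 β) :
    ∫ u in Icc (0:ℝ) β, kk lam β s u * kk lam β s' u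
      = (Real.exp (-|s - s'| * lam) + Real.exp (-(β - |s - s'|) * lam)) * (1 - Real.exp (-β*lam)) / (2*lam) := by
  rw [integral_Icc_eq_integral_Ioc, ← intervalIntegral.integral_of_le hβ.le]
  rcases le_total s' s with h | h
  · rw [abs_of_nonneg (sub_nonneg.2 h)]
    exact kk_int hlam hs'.1 h hs.2
  · rw [abs_sub_comm, abs_of_nonneg (sub_nonneg.2 h)]
    simp_rw [mul_comm (kk lam β s _)]
    exact kk_int hlam hs.1 h hs'.2


lemma alg (A B e lam : ℝ) (h1 : 1 - e ≠ 0) (h2 : lam ≠ 0) :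
    (A + B)/(1-e) = (2*lam/(1-e)^2) * ((A + B)*(1-e)/(2*lam)) := by
  field_simp

theorem stmt19 (β lam : ℝ) (hβ : 0 < β) (hlam : 0 < lam)
    (g : ℝ → ℂ) (hg : MemLp g 2 (volume.restrict (Set.Icc 0 β))) :
    let f : ℝ → ℝ → ℝ := fun s s' =>
      (Real.exp (-|s - s'| * lam) + Real.exp (-(β - |s - s'|) * lam)) /
        (1 - Real.exp (-β * lam))
    0 ≤ (∫ s in Set.Icc (0:ℝ) β, ∫ s' in Set.Icc (0:ℝ) β,
        (starRingEnd ℂ) (g s) * g s' * ((f s s' : ℝ) : ℂ)).re := by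
  intro f
  set μ := volume.restrict (Set.Icc (0:ℝ) β) with hμdef
  haveI : IsFiniteMeasure μ := ⟨by rw [hμdef, Measure.restrict_apply_univ]; exact measure_Icc_lt_top⟩
  have hgi : Integrable g μ := hg.integrable (by norm_num)
  have hden : 0 < 1 - Real.exp (-β*lam) := by
    have : Real.exp (-β*lam) < 1 := Real.exp_lt_one_iff.2 (by nlinarith)
    linarith
  set C : ℝ := 2*lam/(1 - Real.exp (-β*lam))^2 with hCdef
  set K : ℝ → ℝ → ℂ := fun s u => ((kk lam β s u : ℝ) : ℂ) with hKdef
  set H : ℝ → ℂ := fun u => ∫ s, g s * K s u ∂μ with hHdef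
  have haeS : ∀ᵐ x ∂μ, x ∈ Icc (0:ℝ) β := ae_restrict_mem measurableSet_Icc
  have haeP : ∀ᵐ p ∂(μ.prod μ), p.1 ∈ Icc (0:ℝ) β ∧ p.2 ∈ Icc (0:ℝ) β := by
    rw [hμdef, Measure.prod_restrict]
    filter_upwards [ae_restrict_mem (measurableSet_Icc.prod measurableSet_Icc)] with p hp
    exact hp
  -- kernel identity
  have hfk : ∀ s ∈ Icc (0:ℝ) β, ∀ s' ∈ Icc (0:ℝ) β,
      ((f s s' : ℝ) : ℂ) = (C:ℂ) * ∫ u, K s u * K s' u ∂μ := by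
    intro s hs s' hs'
    have h1 : f s s' = C * ∫ u, kk lam β s u * kk lam β s' u ∂μ := by
      rw [hμdef, kk_int_Icc hβ hlam hs hs']
      exact alg _ _ _ _ (ne_of_gt hden) (ne_of_gt hlam)
    have h2 : ((∫ u, kk lam β s u * kk lam β s' u ∂μ : ℝ) : ℂ)
        = ∫ u, K s u * K s' u ∂μ := by
      simp only [hKdef]
      norm_cast
    rw [h1]
    push_cast
    rw [h2]
  -- measurability
  have hKm : AEStronglyMeasurable (fun p : ℝ × ℝ => K p.1 p.2) (μ.prod μ) :=
    (Complex.measurable_ofReal.comp (kk_meas lam β)).aestronglyMeasurable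
  have hKms : ∀ s, AEStronglyMeasurable (fun u => K s u) μ := fun s =>
    (Complex.measurable_ofReal.comp ((kk_meas lam β).comp
      (measurable_const.prodMk measurable_id))).aestronglyMeasurable
  have hKswap : AEStronglyMeasurable (fun p : ℝ × ℝ => K p.2 p.1) (μ.prod μ) :=
    (Complex.measurable_ofReal.comp ((kk_meas lam β).comp measurable_swap)).aestronglyMeasurable
  have hmaj : Integrable (fun p : ℝ × ℝ => ‖g p.1‖) (μ.prod μ) := by
    simpa using hgi.norm.mul_prod (integrable_const (1:ℝ))
  have hKb : ∀ {a b : ℝ}, a ∈ Icc (0:ℝ) β → b ∈ Icc (0:ℝ) β → ‖K a b‖ ≤ 1 := by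
    intro a b ha hb
    simp only [hKdef, Complex.norm_real, Real.norm_eq_abs,
      abs_of_nonneg (kk_nonneg lam β a b)]
    exact kk_le_one hlam.le ha.1 hb.2
  have hF1 : ∀ s ∈ Icc (0:ℝ) β, Integrable (fun p : ℝ × ℝ =>
      g p.1 * (K s p.2 * K p.1 p.2)) (μ.prod μ) := by
    intro s hs
    refine Integrable.mono' hmaj (hgi.1.comp_fst.mul ((hKms s).comp_snd.mul hKm)) ?_
    filter_upwards [haeP] with p hp
    calc ‖g p.1 * (K s p.2 * K p.1 p.2)‖
        = ‖g p.1‖ * (‖K s p.2‖ * ‖K p.1 p.2‖) := by simp [norm_mul]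
      _ ≤ ‖g p.1‖ * (1 * 1) := by
          have := hKb hs hp.2
          have := hKb hp.1 hp.2
          gcongr <;> first | exact norm_nonneg _ | assumption
      _ = ‖g p.1‖ := by ring
  -- inner identity
  have key : ∀ s ∈ Icc (0:ℝ) β,
      (∫ s', (starRingEnd ℂ) (g s) * g s' * ((f s s' : ℝ):ℂ) ∂μ)
        = (C:ℂ) * ((starRingEnd ℂ) (g s) * ∫ u, K s u * H u ∂μ) := by
    intro s hs
    calc (∫ s', (starRingEnd ℂ) (g s) * g s' * ((f s s' : ℝ):ℂ) ∂μ)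
        = ∫ s', (starRingEnd ℂ) (g s) * ((C:ℂ) * ∫ u, g s' * (K s u * K s' u) ∂μ) ∂μ := by
          refine integral_congr_ae ?_
          filter_upwards [haeS] with s' hs'
          rw [mul_assoc, hfk s hs s' hs', MeasureTheory.integral_const_mul]
          ring
      _ = (starRingEnd ℂ) (g s) * ((C:ℂ) * ∫ s', ∫ u, g s' * (K s u * K s' u) ∂μ ∂μ) := by
          rw [MeasureTheory.integral_const_mul, MeasureTheory.integral_const_mul]
      _ = (starRingEnd ℂ) (g s) * ((C:ℂ) * ∫ u, ∫ s', g s' * (K s u * K s' u) ∂μ ∂μ) := by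
          rw [integral_integral_swap (hF1 s hs)]
      _ = (starRingEnd ℂ) (g s) * ((C:ℂ) * ∫ u, K s u * H u ∂μ) := by
          have h3 : ∀ u : ℝ, (∫ s', g s' * (K s u * K s' u) ∂μ) = K s u * H u := by
            intro u
            calc (∫ s', g s' * (K s u * K s' u) ∂μ)
                = ∫ s', K s u * (g s' * K s' u) ∂μ :=
                  integral_congr_ae (.of_forall fun s' => by ring)
              _ = K s u * H u := MeasureTheory.integral_const_mul _ _
          rw [integral_congr_ae (.of_forall h3)]
      _ = (C:ℂ) * ((starRingEnd ℂ) (g s) * ∫ u, K s u * H u ∂μ) := by ring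
  -- H measurable & bounded
  have hHm : AEStronglyMeasurable H μ := by
    have h : AEStronglyMeasurable (fun p : ℝ × ℝ => g p.2 * K p.2 p.1) (μ.prod μ) :=
      hgi.1.comp_snd.mul hKswap
    exact h.integral_prod_right'
  set M : ℝ := ∫ s, ‖g s‖ ∂μ with hMdef
  have hHb : ∀ᵐ u ∂μ, ‖H u‖ ≤ M := by
    filter_upwards [haeS] with u hu
    calc ‖H u‖ ≤ ∫ s, ‖g s * K s u‖ ∂μ := norm_integral_le_integral_norm _
      _ ≤ M := by
        rw [hMdef]
        refine integral_mono_of_nonneg (.of_forall fun s => norm_nonneg _) hgi.norm ?_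
        filter_upwards [haeS] with s hs
        calc ‖g s * K s u‖ = ‖g s‖ * ‖K s u‖ := norm_mul _ _
          _ ≤ ‖g s‖ * 1 := by
              have := hKb hs hu
              gcongr <;> first | exact norm_nonneg _ | assumption
          _ = ‖g s‖ := mul_one _
  have hF2 : Integrable (fun p : ℝ × ℝ =>
      (starRingEnd ℂ) (g p.1) * K p.1 p.2 * H p.2) (μ.prod μ) := by
    have hmaj2 : Integrable (fun p : ℝ × ℝ => ‖g p.1‖ * M) (μ.prod μ) :=
      hgi.norm.mul_prod (integrable_const M)
    refine Integrable.mono' hmaj2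
      (((Complex.continuous_conj.comp_aestronglyMeasurable hgi.1).comp_fst.mul hKm).mul hHm.comp_snd) ?_
    have hHbP : ∀ᵐ p ∂(μ.prod μ), ‖H p.2‖ ≤ M :=
      Measure.quasiMeasurePreserving_snd.ae hHb
    filter_upwards [haeP, hHbP] with p hp hb
    calc ‖(starRingEnd ℂ) (g p.1) * K p.1 p.2 * H p.2‖
        = ‖g p.1‖ * ‖K p.1 p.2‖ * ‖H p.2‖ := by simp [norm_mul]
      _ ≤ ‖g p.1‖ * 1 * M := by
          have := hKb hp.1 hp.2
          gcongr <;> first | exact norm_nonneg _ | assumption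
      _ = ‖g p.1‖ * M := by ring
  -- main computation
  have main : (∫ s, (∫ s', (starRingEnd ℂ) (g s) * g s' * ((f s s' : ℝ):ℂ) ∂μ) ∂μ)
      = (C:ℂ) * ((∫ u, Complex.normSq (H u) ∂μ : ℝ) : ℂ) := by
    calc (∫ s, (∫ s', (starRingEnd ℂ) (g s) * g s' * ((f s s' : ℝ):ℂ) ∂μ) ∂μ)
        = ∫ s, (C:ℂ) * ((starRingEnd ℂ) (g s) * ∫ u, K s u * H u ∂μ) ∂μ := by
          refine integral_congr_ae ?_
          filter_upwards [haeS] with s hs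
          exact key s hs
      _ = (C:ℂ) * ∫ s, ∫ u, (starRingEnd ℂ) (g s) * K s u * H u ∂μ ∂μ := by
          rw [MeasureTheory.integral_const_mul]
          congr 1
          refine integral_congr_ae (.of_forall fun s => ?_)
          dsimp only
          rw [← MeasureTheory.integral_const_mul]
          exact integral_congr_ae (.of_forall fun u => by ring)
      _ = (C:ℂ) * ∫ u, ∫ s, (starRingEnd ℂ) (g s) * K s u * H u ∂μ ∂μ := by
          rw [integral_integral_swap hF2]
      _ = (C:ℂ) * ∫ u, (starRingEnd ℂ) (H u) * H u ∂μ := by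
          have hconj : ∀ u : ℝ, (∫ s, (starRingEnd ℂ) (g s) * K s u ∂μ)
              = (starRingEnd ℂ) (H u) := by
            intro u
            rw [hHdef]
            dsimp only
            rw [← integral_conj]
            exact integral_congr_ae (.of_forall fun s => by
              simp [hKdef, map_mul, Complex.conj_ofReal])
          congr 1
          refine integral_congr_ae (.of_forall fun u => ?_)
          dsimp only
          calc (∫ s, (starRingEnd ℂ) (g s) * K s u * H u ∂μ)
              = (∫ s, (starRingEnd ℂ) (g s) * K s u ∂μ) * H u :=
                MeasureTheory.integral_mul_const _ _
            _ = (starRingEnd ℂ) (H u) * H u := by rw [hconj u]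
      _ = (C:ℂ) * ((∫ u, Complex.normSq (H u) ∂μ : ℝ) : ℂ) := by
          congr 1
          calc (∫ u, (starRingEnd ℂ) (H u) * H u ∂μ)
              = ∫ u, ((Complex.normSq (H u) : ℝ) : ℂ) ∂μ :=
                integral_congr_ae (.of_forall fun u => by
                  dsimp only
                  rw [Complex.normSq_eq_conj_mul_self])
            _ = _ := integral_ofReal (𝕜 := ℂ)
  rw [main, ← Complex.ofReal_mul, Complex.ofReal_re]
  have hC : 0 ≤ C := by positivity
  exact mul_nonneg hC (integral_nonneg fun u => Complex.normSq_nonneg _)
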